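/- For every s > 0, every n ≥ 0 and every word 𝚒 ∈ Λ^n, the conditional expectation given 𝓑_n of the sum Σ_{i ∈ Λ} 1{𝚒i ∈ T_{n+1}(ω)} · diam(Q_{(𝚒i)~})^s equals, on the event 𝚒 ∈ T_n(ω), diam(Q_𝚒̃)^s · p · M^{d−s} · κ(s,K), where κ(s,K) = 1 − ((M−2)^d/M^d)(1 − M^{−sK})(1−p)^{M^d − (M−2)^d}. -/

import Mathlib

open MeasureTheory ProbabilityTheory Set Filter
open scoped ENNReal NNReal Topology Classical

noncomputable section

namespace FractalPercolation

/-! ### Words -/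

/-- The finite word `𝚒|_n` obtained by truncating an infinite word. -/
def wordTake (d M : ℕ) (i : ℕ → Fin (M ^ d)) (n : ℕ) : List (Fin (M ^ d)) :=
  List.ofFn fun k : Fin n => i k

/-- The shift `σ^n 𝚒` of an infinite word. -/
def shiftW (d M : ℕ) (n : ℕ) (i : ℕ → Fin (M ^ d)) : ℕ → Fin (M ^ d) := fun t => i (n + t)

/-- The concatenation `𝚠𝚖` of a finite word with an infinite word. -/
def extendW (d M : ℕ) (w : List (Fin (M ^ d))) (m : ℕ → Fin (M ^ d)) : ℕ → Fin (M ^ d) :=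
  fun t => if h : t < w.length then w.get ⟨t, h⟩ else m (t - w.length)

/-! ### Geometry: cubes and the natural projection -/

/-- Lower-left corner of the `M`-adic cube labelled by the finite word `w`; the labelling
`lab` sends a symbol to the vector of integer offsets (in `{0,…,M-1}^d`) of the corresponding
subcube. -/
def corner (d M : ℕ) (lab : Fin (M ^ d) → Fin d → Fin M) :
    List (Fin (M ^ d)) → Fin d → ℝ
  | [] => fun _ => 0
  | i :: w => fun k => ((lab i k : ℝ) + corner d M lab w k) / (M : ℝ)

/-- The closed `M`-adic cube `Q_𝚠 ⊆ [0,1]^d` labelled by the finite word `w`. -/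
def cube (d M : ℕ) (lab : Fin (M ^ d) → Fin d → Fin M) (w : List (Fin (M ^ d))) :
    Set (Fin d → ℝ) :=
  {x | ∀ k, corner d M lab w k ≤ x k ∧ x k ≤ corner d M lab w k + ((M : ℝ) ^ w.length)⁻¹}

/-- The homothety `h_{Q_𝚠}` sending `[0,1]^d` onto `Q_𝚠`. -/
def hQ (d M : ℕ) (lab : Fin (M ^ d) → Fin d → Fin M) (w : List (Fin (M ^ d)))
    (y : Fin d → ℝ) : Fin d → ℝ :=
  fun k => corner d M lab w k + ((M : ℝ) ^ w.length)⁻¹ * y k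

/-- The natural projection `Π : Λ^ℕ → [0,1]^d`, `{Π(𝚒)} = ⋂_n Q_{𝚒|_n}`. -/
def PiInf (d M : ℕ) (lab : Fin (M ^ d) → Fin d → Fin M) (i : ℕ → Fin (M ^ d)) :
    Fin d → ℝ :=
  fun k => ⨆ n, corner d M lab (wordTake d M i n) k

/-- The cube concentric with the cube of lower-left corner `c` and side length `ℓ`,
with side length `κ·ℓ`. -/
def concCube (d : ℕ) (c : Fin d → ℝ) (ℓ κ : ℝ) : Set (Fin d → ℝ) :=
  {x | ∀ k, c k + (1 - κ) * ℓ / 2 ≤ x k ∧ x k ≤ c k + (1 + κ) * ℓ / 2}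

/-! ### The labelling -/

/-- The set `Λ_B` of labels of subcubes meeting the boundary. -/
def LamB (d M : ℕ) : Set (Fin (M ^ d)) := {i | (i : ℕ) < M ^ d - (M - 2) ^ d}

/-- `lab` is a genuine labelling of the `M^d` subcubes such that the symbols in `Λ_B`
are exactly those of subcubes meeting the boundary of `[0,1]^d`. -/
def LabSpec (d M : ℕ) (lab : Fin (M ^ d) → Fin d → Fin M) : Prop :=
  Function.Bijective lab ∧
    ∀ i, i ∈ LamB d M ↔ ∃ k, (lab i k : ℕ) = 0 ∨ (lab i k : ℕ) = M - 1

/-! ### The percolation process -/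

/-- The finite word `w` survives (i.e. `w ∈ T_{|w|}(ω)`): all its nonempty prefixes
are retained. -/
def Alive (d M : ℕ) {Ω : Type*} (X : List (Fin (M ^ d)) → Ω → Bool) (ω : Ω)
    (w : List (Fin (M ^ d))) : Prop :=
  ∀ u : List (Fin (M ^ d)), u ≠ [] → u <+: w → X u ω = true

/-- The infinite word `𝚒` survives, i.e. `𝚒 ∈ T(ω)`. -/
def TInf (d M : ℕ) {Ω : Type*} (X : List (Fin (M ^ d)) → Ω → Bool) (ω : Ω)
    (i : ℕ → Fin (M ^ d)) : Prop :=
  ∀ n, Alive d M X ω (wordTake d M i n)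

/-- The fractal percolation set `E(ω) = Π(T(ω))`. -/
def Eset (d M : ℕ) (lab : Fin (M ^ d) → Fin d → Fin M) {Ω : Type*}
    (X : List (Fin (M ^ d)) → Ω → Bool) (ω : Ω) : Set (Fin d → ℝ) :=
  {x | ∃ i, TInf d M X ω i ∧ PiInf d M lab i = x}

/-- `(X_𝚒)_{𝚒∈Λ^*}` are i.i.d. Bernoulli(p) random variables under `P`. -/
def PercSpec (d M : ℕ) {Ω : Type*} [MeasurableSpace Ω] (P : Measure Ω)
    (X : List (Fin (M ^ d)) → Ω → Bool) (p : ℝ) : Prop :=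
  (∀ w, Measurable (X w)) ∧
    iIndepFun X P ∧
    ∀ w, P {ω | X w ω = true} = ENNReal.ofReal p

/-- The σ-algebra `𝓑_n` generated by `{X_𝚒 : |𝚒| ≤ n}`. -/
def Bsig (d M : ℕ) {Ω : Type*} (X : List (Fin (M ^ d)) → Ω → Bool) (n : ℕ) :
    MeasurableSpace Ω :=
  ⨆ w ∈ {w : List (Fin (M ^ d)) | w.length ≤ n}, MeasurableSpace.comap (X w) ⊤

/-! ### The substitution map -/

/-- All subcubes of `Q_𝚠` meeting the boundary of `Q_𝚠` die at the next step. -/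
def BdryDead (d M : ℕ) {Ω : Type*} (X : List (Fin (M ^ d)) → Ω → Bool) (ω : Ω)
    (w : List (Fin (M ^ d))) : Prop :=
  ∀ j ∈ LamB d M, ¬ Alive d M X ω (w ++ [j])

/-- Auxiliary recursion for the substitution `𝚒 ↦ 𝚒̃`: `pfx` is the already processed
prefix of the original word. -/
def substAux (d M : ℕ) {Ω : Type*} (X : List (Fin (M ^ d)) → Ω → Bool)
    (e : List (Fin (M ^ d))) (ω : Ω) :
    List (Fin (M ^ d)) → List (Fin (M ^ d)) → List (Fin (M ^ d))
  | _, [] => []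
  | pfx, i :: rest =>
      (if BdryDead d M X ω pfx then e ++ [i] else [i]) ++
        substAux d M X e ω (pfx ++ [i]) rest

/-- The substitution `𝚠 ↦ 𝚠̃` (with substitution word `e = η`) applied to a finite word. -/
def substW (d M : ℕ) {Ω : Type*} (X : List (Fin (M ^ d)) → Ω → Bool)
    (e : List (Fin (M ^ d))) (ω : Ω) (w : List (Fin (M ^ d))) : List (Fin (M ^ d)) :=
  substAux d M X e ω ([]) w

/-- The point `Π(𝚒̃)` for an infinite word `𝚒`. -/
def PiTilde (d M : ℕ) (lab : Fin (M ^ d) → Fin d → Fin M) {Ω : Type*}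
    (X : List (Fin (M ^ d)) → Ω → Bool) (e : List (Fin (M ^ d))) (ω : Ω)
    (i : ℕ → Fin (M ^ d)) : Fin d → ℝ :=
  fun k => ⨆ n, corner d M lab (substW d M X e ω (wordTake d M i n)) k

/-- The image `F(ω) = f(E(ω))` of the substitution map. -/
def Fset (d M : ℕ) (lab : Fin (M ^ d) → Fin d → Fin M) {Ω : Type*}
    (X : List (Fin (M ^ d)) → Ω → Bool) (e : List (Fin (M ^ d))) (ω : Ω) :
    Set (Fin d → ℝ) :=
  {x | ∃ i, TInf d M X ω i ∧ PiTilde d M lab X e ω i = x}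

/-- The substitution word `e = η ∈ Λ^K` has length `K ≥ 1` and its first symbol labels
an inner cube. -/
def EtaSpec (d M K : ℕ) (e : List (Fin (M ^ d))) : Prop :=
  1 ≤ K ∧ e.length = K ∧ ∃ a l, e = a :: l ∧ a ∉ LamB d M

/-- `diam Q_𝚠 = M^{-|𝚠|}` (in the max-norm). -/
def diamQ (d M : ℕ) (w : List (Fin (M ^ d))) : ℝ := ((M : ℝ) ^ w.length)⁻¹

/-- The quantity `κ(s,K)` from the paper. -/
def kappa (d M : ℕ) (p : ℝ) (K : ℕ) (s : ℝ) : ℝ :=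
  1 - (((M : ℝ) - 2) ^ d / (M : ℝ) ^ d) * (1 - (M : ℝ) ^ (-(s * (K : ℝ)))) *
      (1 - p) ^ (M ^ d - (M - 2) ^ d)

/-- The quantity `κ' = lim_{K→∞} κ(s,K)` from the paper. -/
def kappa' (d M : ℕ) (p : ℝ) : ℝ :=
  1 - (((M : ℝ) - 2) ^ d / (M : ℝ) ^ d) * (1 - p) ^ (M ^ d - (M - 2) ^ d)

/-- The random sums `Y^t_n(ω) = Σ_{𝚒∈T_n(ω)} diam(Q_{𝚒̃})^t`. -/
def Yt (d M : ℕ) {Ω : Type*} (X : List (Fin (M ^ d)) → Ω → Bool)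
    (e : List (Fin (M ^ d))) (t : ℝ) (n : ℕ) (ω : Ω) : ℝ :=
  ∑ v : Fin n → Fin (M ^ d),
    if Alive d M X ω (List.ofFn v) then (diamQ d M (substW d M X e ω (List.ofFn v))) ^ t
    else 0

/-! ### Quasisymmetric maps -/

/-- `f` satisfies the quasisymmetry estimate with control function `η`. -/
def IsQSWith {α β : Type*} [PseudoMetricSpace α] [PseudoMetricSpace β]
    (η : ℝ≥0 → ℝ≥0) (f : α → β) : Prop :=
  ∀ x y z : α, x ≠ z →
    nndist (f x) (f y) / nndist (f x) (f z) ≤ η (nndist x y / nndist x z)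

/-- A homeomorphism is quasisymmetric if it admits a control function which is a
homeomorphism of `[0,∞)`. -/
def IsQSHomeo {α β : Type*} [MetricSpace α] [MetricSpace β] (f : α ≃ₜ β) : Prop :=
  ∃ η : ℝ≥0 ≃ₜ ℝ≥0, IsQSWith (⇑η) (⇑f)

/-! ### The auxiliary map g and the extension of f -/

/-- `g : [0,1]^d → [0,1]^d` is an `L`-bi-Lipschitz bijection of the unit cube, equal to the
identity on the boundary, mapping `I = (1-2/M)[0,1]^d` homothetically onto `(1-2/M)Q_η`. -/
def GSpec (d M K : ℕ) (lab : Fin (M ^ d) → Fin d → Fin M) (e : List (Fin (M ^ d)))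
    (L : ℝ) (g : (Fin d → ℝ) → (Fin d → ℝ)) : Prop :=
  Set.BijOn g (cube d M lab ([])) (cube d M lab ([])) ∧
    (∀ x ∈ cube d M lab ([]), ∀ y ∈ cube d M lab ([]),
      L⁻¹ * dist x y ≤ dist (g x) (g y) ∧ dist (g x) (g y) ≤ L * dist x y) ∧
    (∀ x ∈ frontier (cube d M lab ([] : List (Fin (M ^ d)))), g x = x) ∧
    (∃ v : Fin d → ℝ,
      ∀ x ∈ concCube d (fun _ => (0 : ℝ)) 1 (1 - 2 / (M : ℝ)),
        g x = ((M : ℝ) ^ K)⁻¹ • x + v) ∧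
    g '' concCube d (fun _ => (0 : ℝ)) 1 (1 - 2 / (M : ℝ)) =
      concCube d (corner d M lab e) (((M : ℝ) ^ K)⁻¹) (1 - 2 / (M : ℝ))

/-- `F` is (the coding of) the extension of the substitution map to `[0,1]^d`:
on surviving words it is the substitution map, and on a word whose largest surviving
prefix is `𝚒|_n` it is given by the two cases of the definition in the paper. -/
def ExtMapSpec (d M : ℕ) (lab : Fin (M ^ d) → Fin d → Fin M) {Ω : Type*}
    (X : List (Fin (M ^ d)) → Ω → Bool) (e : List (Fin (M ^ d)))
    (g : (Fin d → ℝ) → (Fin d → ℝ)) (ω : Ω)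
    (F : (ℕ → Fin (M ^ d)) → (Fin d → ℝ)) : Prop :=
  (∀ i, TInf d M X ω i → F i = PiTilde d M lab X e ω i) ∧
    ∀ (i : ℕ → Fin (M ^ d)) (n : ℕ),
      Alive d M X ω (wordTake d M i n) → ¬ Alive d M X ω (wordTake d M i (n + 1)) →
        ((∃ j ∈ LamB d M, Alive d M X ω (wordTake d M i n ++ [j])) →
          F i = hQ d M lab (substW d M X e ω (wordTake d M i n))
              (PiInf d M lab (shiftW d M n i))) ∧
        ((∀ j ∈ LamB d M, ¬ Alive d M X ω (wordTake d M i n ++ [j])) →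
          F i = hQ d M lab (substW d M X e ω (wordTake d M i n))
              (g (PiInf d M lab (shiftW d M n i))))

section Aux

variable {d M : ℕ} {Ω : Type*} {X : List (Fin (M ^ d)) → Ω → Bool}
  {e : List (Fin (M ^ d))} {ω : Ω}

lemma substAux_append (u v pfx : List (Fin (M ^ d))) :
    substAux d M X e ω pfx (u ++ v) =
      substAux d M X e ω pfx u ++ substAux d M X e ω (pfx ++ u) v := by
  induction u generalizing pfx with
  | nil => simp [substAux]
  | cons a u ih =>
    simp only [List.cons_append, substAux]
    rw [show substAux d M X e ω (pfx ++ [a]) (u ++ v) =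
          substAux d M X e ω (pfx ++ [a]) u ++ substAux d M X e ω (pfx ++ [a] ++ u) v from ih _]
    simp [List.append_assoc]

lemma substW_concat (w : List (Fin (M ^ d))) (i : Fin (M ^ d)) :
    substW d M X e ω (w ++ [i]) =
      substW d M X e ω w ++ (if BdryDead d M X ω w then e ++ [i] else [i]) := by
  unfold substW
  rw [substAux_append]
  by_cases h : BdryDead d M X ω ([] ++ w) <;> simp [substAux, h] at * <;> simp [h]

lemma length_substW_concat (w : List (Fin (M ^ d))) (i : Fin (M ^ d)) :
    (substW d M X e ω (w ++ [i])).length =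
      (substW d M X e ω w).length + (if BdryDead d M X ω w then e.length + 1 else 1) := by
  rw [substW_concat]
  by_cases h : BdryDead d M X ω w <;> simp [h]

lemma alive_concat (w : List (Fin (M ^ d))) (j : Fin (M ^ d)) :
    Alive d M X ω (w ++ [j]) ↔ Alive d M X ω w ∧ X (w ++ [j]) ω = true := by
  constructor
  · intro h
    exact ⟨fun u hu hpre => h u hu (hpre.trans (List.prefix_append _ _)),
      h _ (by simp) List.prefix_rfl⟩
  · rintro ⟨hw, hXt⟩ u hu hpre
    by_cases hlen : u.length ≤ w.length
    · exact hw u hu (List.prefix_of_prefix_length_le hpre (List.prefix_append _ _) hlen)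
    · have h1 : u.length = (w ++ [j]).length := by
        have := hpre.length_le
        simp only [List.length_append, List.length_singleton] at this ⊢
        omega
      rw [hpre.eq_of_length h1]
      exact hXt

lemma alive_iff_take (u : List (Fin (M ^ d))) :
    Alive d M X ω u ↔ ∀ k : Fin u.length, X (u.take (k + 1)) ω = true := by
  constructor
  · intro h k
    refine h _ ?_ (List.take_prefix _ _)
    have hne : u ≠ [] := by
      intro hu; rw [hu] at k; exact absurd k.2 (by simp)
    simp [List.take_eq_nil_iff, hne]
  · intro h u' hne hpre
    have hl : u'.length ≤ u.length := hpre.length_le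
    have h1 : 1 ≤ u'.length := List.length_pos_iff.mpr hne
    have hk : u'.length - 1 < u.length := by omega
    have h2 : u'.length - 1 + 1 = u'.length := by omega
    have : u' = u.take (u'.length - 1 + 1) := by
      rw [h2]; exact List.prefix_iff_eq_take.mp hpre
    rw [this]
    exact h ⟨u'.length - 1, hk⟩

end Aux
section Aux2

variable {d M : ℕ} {Ω : Type*} {X : List (Fin (M ^ d)) → Ω → Bool}
  {e : List (Fin (M ^ d))} {ω : Ω} {n : ℕ}

lemma measurableSet_X_eq (hu : (u : List (Fin (M ^ d))).length ≤ n) (b : Bool) :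
    MeasurableSet[Bsig d M X n] {ω | X u ω = b} := by
  have h1 : MeasurableSpace.comap (X u) ⊤ ≤ Bsig d M X n :=
    le_iSup₂ (f := fun (w : List (Fin (M ^ d))) (_ : w ∈ {w : List (Fin (M ^ d)) | w.length ≤ n})
      => MeasurableSpace.comap (X w) ⊤) u hu
  exact h1 _ ⟨{b}, trivial, rfl⟩

lemma measurableSet_alive {u : List (Fin (M ^ d))} (hu : u.length ≤ n) :
    MeasurableSet[Bsig d M X n] {ω | Alive d M X ω u} := by
  have heq : {ω | Alive d M X ω u} =
      ⋂ k : Fin u.length, {ω | X (u.take (k + 1)) ω = true} := by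
    ext ω; simp only [Set.mem_setOf_eq, Set.mem_iInter, alive_iff_take]
  rw [heq]
  exact MeasurableSet.iInter fun k =>
    measurableSet_X_eq (le_trans (by rw [List.length_take]; exact min_le_right _ _) hu) true

lemma measurableSet_bdryDead {u : List (Fin (M ^ d))} (hu : u.length + 1 ≤ n) :
    MeasurableSet[Bsig d M X n] {ω | BdryDead d M X ω u} := by
  have heq : {ω | BdryDead d M X ω u} =
      ⋂ j : Fin (M ^ d), {ω | j ∈ LamB d M → ¬ Alive d M X ω (u ++ [j])} := by
    ext ω; simp only [Set.mem_setOf_eq, Set.mem_iInter, BdryDead]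
  rw [heq]
  refine MeasurableSet.iInter fun j => ?_
  by_cases hj : j ∈ LamB d M
  · have : {ω | j ∈ LamB d M → ¬ Alive d M X ω (u ++ [j])} =
        {ω | Alive d M X ω (u ++ [j])}ᶜ := by ext ω; simp [hj]
    rw [this]
    exact (measurableSet_alive (by simpa using hu)).compl
  · have : {ω | j ∈ LamB d M → ¬ Alive d M X ω (u ++ [j])} = Set.univ := by
      ext ω; simp [hj]
    rw [this]; exact MeasurableSet.univ

lemma diamQ_rpow (hM0 : (0:ℝ) < M) (v : List (Fin (M ^ d))) (s : ℝ) :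
    diamQ d M v ^ s = (M : ℝ) ^ (-(v.length : ℝ) * s) := by
  rw [diamQ, ← Real.rpow_natCast (M : ℝ) v.length, ← Real.rpow_neg hM0.le,
    ← Real.rpow_mul hM0.le]

lemma substW_diam_concat (hM0 : (0:ℝ) < M) {s : ℝ} (w : List (Fin (M ^ d))) (i : Fin (M ^ d)) :
    diamQ d M (substW d M X e ω (w ++ [i])) ^ s =
      diamQ d M (substW d M X e ω w) ^ s *
        (if BdryDead d M X ω w then (M : ℝ) ^ (-(((e.length : ℝ) + 1) * s))
          else (M : ℝ) ^ (-s)) := by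
  rw [diamQ_rpow hM0, diamQ_rpow hM0, length_substW_concat]
  by_cases h : BdryDead d M X ω w
  · simp only [h, if_true]
    rw [← Real.rpow_add hM0]
    congr 1
    push_cast
    ring
  · simp only [h, if_false]
    rw [← Real.rpow_add hM0]
    congr 1
    push_cast
    ring

lemma sm_phi (hM0 : (0:ℝ) < M) {s : ℝ} :
    ∀ u : List (Fin (M ^ d)), u.length ≤ n →
      StronglyMeasurable[Bsig d M X n]
        (fun ω => diamQ d M (substW d M X e ω u) ^ s) := by
  intro u
  induction u using List.reverseRecOn with
  | nil =>
    intro _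
    simp only [substW, substAux]
    exact stronglyMeasurable_const
  | append_singleton u i ih =>
    intro hlen
    have hu : u.length ≤ n := by simp only [List.length_append, List.length_singleton] at hlen; omega
    have hu1 : u.length + 1 ≤ n := by
      simp only [List.length_append, List.length_singleton] at hlen; omega
    have heq : (fun ω => diamQ d M (substW d M X e ω (u ++ [i])) ^ s) =
        fun ω => diamQ d M (substW d M X e ω u) ^ s *
          (if BdryDead d M X ω u then (M : ℝ) ^ (-(((e.length : ℝ) + 1) * s))
            else (M : ℝ) ^ (-s)) := by
      funext ω; exact substW_diam_concat hM0 u i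
    rw [heq]
    refine (ih hu).mul ?_
    have hD := measurableSet_bdryDead (X := X) hu1
    exact (Measurable.ite hD measurable_const measurable_const).stronglyMeasurable

end Aux2
lemma card_filter_lt (N t : ℕ) (ht : t ≤ N) :
    (Finset.univ.filter (fun i : Fin N => (i : ℕ) < t)).card = t := by
  have h : Finset.univ.filter (fun i : Fin N => (i : ℕ) < t) =
      Finset.map (Fin.castLEEmb ht) Finset.univ := by
    ext j
    simp only [Finset.mem_filter, Finset.mem_univ, true_and, Finset.mem_map]
    constructor
    · intro hj
      exact ⟨⟨(j : ℕ), hj⟩, by ext; simp [Fin.castLEEmb, Fin.castLE]⟩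
    · rintro ⟨k, rfl⟩
      simpa [Fin.castLEEmb, Fin.castLE] using k.2
  rw [h, Finset.card_map, Finset.card_univ, Fintype.card_fin]
theorem statement10
    (d M : ℕ) (hd : 1 ≤ d) (hM : 3 ≤ M)
    (lab : Fin (M ^ d) → Fin d → Fin M) (hlab : LabSpec d M lab)
    (K : ℕ) (e : List (Fin (M ^ d))) (he : EtaSpec d M K e)
    {Ω : Type*} [MeasurableSpace Ω] (P : Measure Ω) [IsProbabilityMeasure P]
    (X : List (Fin (M ^ d)) → Ω → Bool) (p : ℝ) (hp0 : 0 < p) (hp1 : p < 1)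
    (hX : PercSpec d M P X p)
    (s : ℝ) (hs : 0 < s) (n : ℕ) (w : List (Fin (M ^ d))) (hw : w.length = n) :
    ∀ᵐ ω ∂P, Alive d M X ω w →
      MeasureTheory.condExp (Bsig d M X n) P
          (fun ω' => ∑ i : Fin (M ^ d),
            if Alive d M X ω' (w ++ [i])
            then diamQ d M (substW d M X e ω' (w ++ [i])) ^ s else 0) ω =
        diamQ d M (substW d M X e ω w) ^ s *
          (p * (M : ℝ) ^ ((d : ℝ) - s) * kappa d M p K s) := by
  classical
  obtain ⟨hXm, hXind, hXp⟩ := hX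
  obtain ⟨hK1, heK, -⟩ := he
  have hM2 : 2 ≤ M := by omega
  have hM0 : (0:ℝ) < (M:ℝ) := by exact_mod_cast (by omega : 0 < M)
  have hm1 : (1:ℝ) ≤ (M:ℝ) := by exact_mod_cast (by omega : 1 ≤ M)
  have hq0 : (0:ℝ) ≤ 1 - p := by linarith
  set c1v : ℝ := (M:ℝ) ^ (-(((K:ℝ) + 1) * s)) with hc1vdef
  set c2v : ℝ := (M:ℝ) ^ (-s) with hc2vdef
  set A : Set Ω := {ω | Alive d M X ω w} with hAdef
  set D : Set Ω := {ω | ∀ j ∈ LamB d M, X (w ++ [j]) ω = false} with hDdef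
  set g : Ω → ℝ := A.indicator (fun ω => diamQ d M (substW d M X e ω w) ^ s) with hgdef
  set S : Ω → ℝ := fun ω => ∑ i : Fin (M ^ d),
      if X (w ++ [i]) ω = true then (if ω ∈ D then c1v else c2v) else 0 with hSdef
  -- rewrite the integrand
  have hDB : ∀ ω' : Ω, Alive d M X ω' w → (BdryDead d M X ω' w ↔ ω' ∈ D) := by
    intro ω' hA'
    constructor
    · intro hB j hj
      have h1 := hB j hj
      rw [alive_concat] at h1
      have h2 : ¬ X (w ++ [j]) ω' = true := fun h => h1 ⟨hA', h⟩
      simpa using h2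
    · intro hD' j hj hAl
      rw [alive_concat] at hAl
      rw [hD' j hj] at hAl
      exact absurd hAl.2 (by simp)
  have hf_eq : (fun ω' => ∑ i : Fin (M ^ d),
        if Alive d M X ω' (w ++ [i])
        then diamQ d M (substW d M X e ω' (w ++ [i])) ^ s else 0) = g * S := by
    funext ω'
    show _ = g ω' * S ω'
    by_cases hA' : Alive d M X ω' w
    · have hgω : g ω' = diamQ d M (substW d M X e ω' w) ^ s := by
        rw [hgdef]; exact Set.indicator_of_mem (show ω' ∈ A from hA') _
      rw [hgω, hSdef, Finset.mul_sum]
      refine Finset.sum_congr rfl fun i _ => ?_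
      by_cases hXi : X (w ++ [i]) ω' = true
      · have hAl : Alive d M X ω' (w ++ [i]) := (alive_concat w i).mpr ⟨hA', hXi⟩
        rw [if_pos hAl, if_pos hXi]
        rw [substW_diam_concat hM0 w i, heK]
        by_cases hB : BdryDead d M X ω' w
        · rw [if_pos hB, if_pos ((hDB ω' hA').mp hB)]
        · rw [if_neg hB, if_neg (fun h => hB ((hDB ω' hA').mpr h))]
      · have hAl : ¬ Alive d M X ω' (w ++ [i]) := fun h => hXi ((alive_concat w i).mp h).2
        rw [if_neg hAl, if_neg hXi, mul_zero]
    · have hgω : g ω' = 0 := by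
        rw [hgdef]; exact Set.indicator_of_notMem (show ω' ∉ A from hA') _
      rw [hgω, zero_mul]
      refine Finset.sum_eq_zero fun i _ => ?_
      rw [if_neg (fun h => hA' ((alive_concat w i).mp h).1)]
  -- measurability
  have hcomap_le : ∀ u : List (Fin (M ^ d)),
      MeasurableSpace.comap (X u) ⊤ ≤ ‹MeasurableSpace Ω› := by
    intro u sσ hσ
    rcases hσ with ⟨t, -, rfl⟩
    exact hXm u trivial
  have hB_le : Bsig d M X n ≤ ‹MeasurableSpace Ω› := iSup₂_le fun u _ => hcomap_le u
  have hXset_meas : ∀ (u : List (Fin (M ^ d))) (b : Bool),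
      MeasurableSet {ω | X u ω = b} := by
    intro u b
    have h1 : {ω | X u ω = b} = X u ⁻¹' {b} := rfl
    rw [h1]; exact hXm u trivial
  have hD_meas : MeasurableSet D := by
    have heq : D = ⋂ j : Fin (M ^ d), {ω | j ∈ LamB d M → X (w ++ [j]) ω = false} := by
      ext ω'; simp only [hDdef, Set.mem_setOf_eq, Set.mem_iInter]
    rw [heq]
    refine MeasurableSet.iInter fun j => ?_
    by_cases hj : j ∈ LamB d M
    · have h1 : {ω | j ∈ LamB d M → X (w ++ [j]) ω = false} = {ω | X (w ++ [j]) ω = false} := by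
        ext ω'; simp [hj]
      rw [h1]; exact hXset_meas _ false
    · have h1 : {ω | j ∈ LamB d M → X (w ++ [j]) ω = false} = Set.univ := by
        ext ω'; simp [hj]
      rw [h1]; exact MeasurableSet.univ
  have hS_m0 : Measurable S := by
    rw [hSdef]
    refine Finset.measurable_sum _ fun i _ => ?_
    exact Measurable.ite (hXset_meas _ true)
      (Measurable.ite hD_meas measurable_const measurable_const) measurable_const
  have hcondS : MeasureTheory.condExp (Bsig d M X n) P S =ᵐ[P]
      (fun _ => ∫ ω', S ω' ∂P) := by
    have hmN_le : (⨆ u ∈ {u : List (Fin (M ^ d)) | ∃ i : Fin (M ^ d), u = w ++ [i]},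
        MeasurableSpace.comap (X u) ⊤) ≤ ‹MeasurableSpace Ω› :=
      iSup₂_le fun u _ => hcomap_le u
    have hmN_X : ∀ (i : Fin (M ^ d)) (b : Bool),
        MeasurableSet[(⨆ u ∈ {u : List (Fin (M ^ d)) | ∃ i : Fin (M ^ d), u = w ++ [i]},
        MeasurableSpace.comap (X u) ⊤)] {ω | X (w ++ [i]) ω = b} := by
      intro i b
      have h1 : MeasurableSpace.comap (X (w ++ [i])) ⊤ ≤ (⨆ u ∈ {u : List (Fin (M ^ d)) | ∃ i : Fin (M ^ d), u = w ++ [i]},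
        MeasurableSpace.comap (X u) ⊤) :=
        le_iSup₂ (f := fun (u : List (Fin (M ^ d)))
          (_ : u ∈ {u : List (Fin (M ^ d)) | ∃ i : Fin (M ^ d), u = w ++ [i]}) =>
            MeasurableSpace.comap (X u) ⊤) (w ++ [i]) ⟨i, rfl⟩
      exact h1 _ ⟨{b}, trivial, rfl⟩
    have hmN_D : MeasurableSet[(⨆ u ∈ {u : List (Fin (M ^ d)) | ∃ i : Fin (M ^ d), u = w ++ [i]},
        MeasurableSpace.comap (X u) ⊤)] D := by
      have heq : D = ⋂ j : Fin (M ^ d), {ω | j ∈ LamB d M → X (w ++ [j]) ω = false} := by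
        ext ω'; simp only [hDdef, Set.mem_setOf_eq, Set.mem_iInter]
      rw [heq]
      refine MeasurableSet.iInter fun j => ?_
      by_cases hj : j ∈ LamB d M
      · have h1 : {ω | j ∈ LamB d M → X (w ++ [j]) ω = false}
            = {ω | X (w ++ [j]) ω = false} := by
          ext ω'; simp [hj]
        rw [h1]; exact hmN_X j false
      · have h1 : {ω | j ∈ LamB d M → X (w ++ [j]) ω = false} = Set.univ := by
          ext ω'; simp [hj]
        rw [h1]; exact MeasurableSet.univ
    have hS_mN : Measurable[(⨆ u ∈ {u : List (Fin (M ^ d)) | ∃ i : Fin (M ^ d), u = w ++ [i]},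
        MeasurableSpace.comap (X u) ⊤)] S := by
      rw [hSdef]
      refine Finset.measurable_sum _ fun i _ => ?_
      exact Measurable.ite (hmN_X i true)
        (Measurable.ite hmN_D measurable_const measurable_const) measurable_const
    have hIndep : Indep (⨆ u ∈ {u : List (Fin (M ^ d)) | ∃ i : Fin (M ^ d), u = w ++ [i]},
        MeasurableSpace.comap (X u) ⊤) (Bsig d M X n) P := by
      have hdisj : Disjoint {u : List (Fin (M ^ d)) | ∃ i : Fin (M ^ d), u = w ++ [i]}
          {u : List (Fin (M ^ d)) | u.length ≤ n} := by
        rw [Set.disjoint_left]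
        rintro u ⟨i, rfl⟩ hu
        simp only [Set.mem_setOf_eq, List.length_append, List.length_singleton, hw] at hu
        omega
      exact indep_iSup_of_disjoint (fun u => hcomap_le u) hXind hdisj
    haveI : IsFiniteMeasure (P.trim hB_le) := isFiniteMeasure_trim hB_le
    exact condExp_indep_eq hmN_le hB_le hS_mN.stronglyMeasurable hIndep
  -- integrability
  have hc1le : c1v ≤ 1 := by
    rw [hc1vdef]
    refine Real.rpow_le_one_of_one_le_of_nonpos hm1 ?_
    have : (0:ℝ) ≤ ((K:ℝ) + 1) * s := by positivity
    linarith
  have hc2le : c2v ≤ 1 := by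
    rw [hc2vdef]
    exact Real.rpow_le_one_of_one_le_of_nonpos hm1 (by linarith)
  have hc1nn : 0 ≤ c1v := Real.rpow_nonneg hM0.le _
  have hc2nn : 0 ≤ c2v := Real.rpow_nonneg hM0.le _
  have hS_bound : ∀ ω', ‖S ω'‖ ≤ ((M ^ d : ℕ) : ℝ) := by
    intro ω'
    have h0 : 0 ≤ S ω' := by
      rw [hSdef]
      refine Finset.sum_nonneg fun i _ => ?_
      by_cases h1 : X (w ++ [i]) ω' = true <;> by_cases h2 : ω' ∈ D <;>
        simp [h1, h2, hc1nn, hc2nn]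
    rw [Real.norm_eq_abs, abs_of_nonneg h0]
    calc S ω' ≤ ∑ _i : Fin (M ^ d), (1:ℝ) := by
          rw [hSdef]
          refine Finset.sum_le_sum fun i _ => ?_
          by_cases h1 : X (w ++ [i]) ω' = true <;> by_cases h2 : ω' ∈ D <;>
            simp [h1, h2, hc1le, hc2le]
      _ = ((M ^ d : ℕ) : ℝ) := by
          rw [Finset.sum_const, Finset.card_univ, Fintype.card_fin, nsmul_eq_mul, mul_one]
  have hS_int : Integrable S P :=
    Integrable.mono' (integrable_const ((M ^ d : ℕ) : ℝ)) (hS_m0.aestronglyMeasurable (μ := P))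
      (ae_of_all _ hS_bound)
  have hg_sm : StronglyMeasurable[Bsig d M X n] g :=
    (sm_phi hM0 w (le_of_eq hw)).indicator (measurableSet_alive (le_of_eq hw))
  have hg_bound : ∀ ω', ‖g ω'‖ ≤ 1 := by
    intro ω'
    rw [Real.norm_eq_abs]
    by_cases h : ω' ∈ A
    · rw [hgdef, Set.indicator_of_mem h, diamQ_rpow hM0]
      rw [abs_of_nonneg (Real.rpow_nonneg hM0.le _)]
      refine Real.rpow_le_one_of_one_le_of_nonpos hm1 ?_
      have h1 : (0:ℝ) ≤ ((substW d M X e ω' w).length : ℝ) * s := by positivity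
      linarith
    · rw [hgdef, Set.indicator_of_notMem h]
      simp
  have hgS_int : Integrable (g * S) P := by
    refine Integrable.mono' (integrable_const ((M ^ d : ℕ) : ℝ))
      (((hg_sm.mono hB_le).aestronglyMeasurable).mul hS_m0.aestronglyMeasurable)
      (ae_of_all _ fun ω' => ?_)
    have : ‖(g * S) ω'‖ = ‖g ω'‖ * ‖S ω'‖ := by
      simp [Pi.mul_apply, abs_mul]
    rw [this]
    calc ‖g ω'‖ * ‖S ω'‖ ≤ 1 * ((M ^ d : ℕ) : ℝ) :=
          mul_le_mul (hg_bound ω') (hS_bound ω') (norm_nonneg _) zero_le_one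
      _ = _ := one_mul _
  -- conditional expectation
  have hpull := condExp_mul_of_stronglyMeasurable_left hg_sm hgS_int hS_int
  have hEim : ∀ i : Fin (M ^ d), MeasurableSet {ω | X (w ++ [i]) ω = true} :=
    fun i => hXset_meas _ true
  have hPfalse : ∀ u : List (Fin (M ^ d)),
      P {ω | X u ω = false} = 1 - ENNReal.ofReal p := by
    intro u
    have hcompl : {ω | X u ω = false} = {ω | X u ω = true}ᶜ := by
      ext ω'; simp
    rw [hcompl, measure_compl (hXset_meas u true) (measure_ne_top _ _), measure_univ, hXp]
  set Bfin : Finset (Fin (M ^ d)) := Finset.univ.filter (fun j => j ∈ LamB d M) with hBfindef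
  have hBcard : Bfin.card = M ^ d - (M - 2) ^ d := by
    have heq : Bfin = Finset.univ.filter (fun j : Fin (M ^ d) => (j : ℕ) < M ^ d - (M - 2) ^ d) := by
      ext j; simp only [hBfindef, Finset.mem_filter, Finset.mem_univ, true_and]; exact Iff.rfl
    rw [heq, card_filter_lt _ _ (Nat.sub_le _ _)]
  have hpowle : (M - 2) ^ d ≤ M ^ d := Nat.pow_le_pow_left (by omega) d
  have hNBcard : (Finset.univ.filter (fun j : Fin (M ^ d) => ¬ j ∈ LamB d M)).card
      = (M - 2) ^ d := by
    have h2 := Finset.card_filter_add_card_filter_not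
      (s := (Finset.univ : Finset (Fin (M ^ d)))) (p := fun j => j ∈ LamB d M)
    rw [Finset.card_univ, Fintype.card_fin] at h2
    have h3 : (Finset.univ.filter (fun j : Fin (M ^ d) => j ∈ LamB d M)).card
        = M ^ d - (M - 2) ^ d := hBcard
    omega
  have hinj : Function.Injective (fun j : Fin (M ^ d) => w ++ [j]) := by
    intro a b hab
    simpa using List.append_cancel_left hab
  have hPD_inter : ∀ i : Fin (M ^ d), i ∉ LamB d M →
      P ({ω | X (w ++ [i]) ω = true} ∩ D)
        = ENNReal.ofReal p * (1 - ENNReal.ofReal p) ^ (M ^ d - (M - 2) ^ d) := by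
    intro i hiB
    have hiBf : i ∉ Bfin := by simp [hBfindef, hiB]
    set T : Finset (Fin (M ^ d)) := insert i Bfin with hTdef
    set L : Finset (List (Fin (M ^ d))) := T.image (fun j => w ++ [j]) with hLdef
    set sets : List (Fin (M ^ d)) → Set Bool :=
      fun u => if u = w ++ [i] then {true} else {false} with hsetsdef
    have hprod := hXind.measure_inter_preimage_eq_mul (sets := sets) L (fun u _ => trivial)
    have hLHS : (⋂ u ∈ L, X u ⁻¹' sets u) = ({ω | X (w ++ [i]) ω = true} ∩ D) := by
      ext ω'
      simp only [Set.mem_iInter, Set.mem_preimage, Set.mem_inter_iff, Set.mem_setOf_eq]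
      constructor
      · intro h
        refine ⟨?_, ?_⟩
        · have hmem : (w ++ [i]) ∈ L :=
            Finset.mem_image.mpr ⟨i, Finset.mem_insert_self _ _, rfl⟩
          have h1 := h _ hmem
          simpa [hsetsdef] using h1
        · intro j hj
          have hjT : (w ++ [j]) ∈ L :=
            Finset.mem_image.mpr ⟨j, Finset.mem_insert_of_mem (by simp [hBfindef, hj]), rfl⟩
          have h2 := h _ hjT
          have hne : w ++ [j] ≠ w ++ [i] := fun hEq => hiB (hinj hEq ▸ hj)
          simpa [hsetsdef, hne] using h2
      · rintro ⟨h1, h2⟩ u hu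
        rcases Finset.mem_image.mp hu with ⟨j, hjT, rfl⟩
        rcases Finset.mem_insert.mp hjT with rfl | hjB
        · simpa [hsetsdef] using h1
        · have hj : j ∈ LamB d M := by simpa [hBfindef] using hjB
          have hne : w ++ [j] ≠ w ++ [i] := fun hEq => hiB (hinj hEq ▸ hj)
          simpa [hsetsdef, hne] using h2 j hj
    have hRHS : ∏ u ∈ L, P (X u ⁻¹' sets u)
        = ENNReal.ofReal p * (1 - ENNReal.ofReal p) ^ (M ^ d - (M - 2) ^ d) := by
      rw [hLdef, Finset.prod_image (fun a _ b _ hab => hinj hab), hTdef,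
        Finset.prod_insert hiBf]
      have h1 : X (w ++ [i]) ⁻¹' sets (w ++ [i]) = {ω | X (w ++ [i]) ω = true} := by
        ext ω'; simp [hsetsdef]
      have h2 : ∀ j ∈ Bfin, P (X (w ++ [j]) ⁻¹' sets (w ++ [j])) = 1 - ENNReal.ofReal p := by
        intro j hjB
        have hj : j ∈ LamB d M := by simpa [hBfindef] using hjB
        have hne : w ++ [j] ≠ w ++ [i] := fun hEq => hiB (hinj hEq ▸ hj)
        have h3 : X (w ++ [j]) ⁻¹' sets (w ++ [j]) = {ω | X (w ++ [j]) ω = false} := by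
          ext ω'; simp [hsetsdef, hne]
        rw [h3, hPfalse]
      rw [h1, hXp, Finset.prod_congr rfl h2, Finset.prod_const, hBcard]
    rw [← hLHS, hprod, hRHS]
  have hPiD_val : ∀ i : Fin (M ^ d),
      (P ({ω | X (w ++ [i]) ω = true} ∩ D)).toReal
        = if i ∈ LamB d M then 0 else p * (1 - p) ^ (M ^ d - (M - 2) ^ d) := by
    intro i
    by_cases hiB : i ∈ LamB d M
    · rw [if_pos hiB]
      have hempty : {ω | X (w ++ [i]) ω = true} ∩ D = ∅ := by
        ext ω'
        simp only [Set.mem_inter_iff, Set.mem_setOf_eq, Set.mem_empty_iff_false, iff_false,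
          not_and, hDdef]
        intro h1 h2
        have := h2 i hiB
        rw [h1] at this
        exact absurd this (by simp)
      rw [hempty]
      simp
    · rw [if_neg hiB, hPD_inter i hiB, ENNReal.toReal_mul, ENNReal.toReal_pow,
        ENNReal.toReal_ofReal hp0.le]
      have h1 : (1 : ℝ≥0∞) - ENNReal.ofReal p = ENNReal.ofReal (1 - p) := by
        rw [← ENNReal.ofReal_one, ← ENNReal.ofReal_sub _ hp0.le]
      rw [h1, ENNReal.toReal_ofReal hq0]
  -- integral of S
  have hintegrand : ∀ i : Fin (M ^ d),
      (fun ω' => if X (w ++ [i]) ω' = true then (if ω' ∈ D then c1v else c2v) else 0)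
        = (fun ω' => Set.indicator {ω | X (w ++ [i]) ω = true} (fun _ => c2v) ω'
            + Set.indicator ({ω | X (w ++ [i]) ω = true} ∩ D) (fun _ => c1v - c2v) ω') := by
    intro i
    funext ω'
    by_cases h1 : X (w ++ [i]) ω' = true <;> by_cases h2 : ω' ∈ D <;>
      simp [Set.indicator_apply, h1, h2] <;> ring
  have hterm_int : ∀ i : Fin (M ^ d), Integrable
      (fun ω' => if X (w ++ [i]) ω' = true then (if ω' ∈ D then c1v else c2v) else 0) P := by
    intro i
    rw [hintegrand i]
    exact ((integrable_const c2v).indicator (hEim i)).add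
      ((integrable_const (c1v - c2v)).indicator ((hEim i).inter hD_meas))
  have hterm_val : ∀ i : Fin (M ^ d),
      ∫ ω', (if X (w ++ [i]) ω' = true then (if ω' ∈ D then c1v else c2v) else 0) ∂P
        = p * c2v + (P ({ω | X (w ++ [i]) ω = true} ∩ D)).toReal * (c1v - c2v) := by
    intro i
    rw [hintegrand i, integral_add ((integrable_const c2v).indicator (hEim i))
      ((integrable_const (c1v - c2v)).indicator ((hEim i).inter hD_meas)),
      integral_indicator_const _ (hEim i),
      integral_indicator_const _ ((hEim i).inter hD_meas), measureReal_def, measureReal_def, hXp,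
      ENNReal.toReal_ofReal hp0.le, smul_eq_mul, smul_eq_mul]
  have hSint_val : ∫ ω', S ω' ∂P
      = ((M ^ d : ℕ) : ℝ) * (p * c2v)
        + (((M - 2) ^ d : ℕ) : ℝ) * (p * (1 - p) ^ (M ^ d - (M - 2) ^ d) * (c1v - c2v)) := by
    rw [hSdef, integral_finset_sum _ (fun i _ => hterm_int i)]
    have h1 : ∀ i : Fin (M ^ d),
        ∫ ω', (if X (w ++ [i]) ω' = true then (if ω' ∈ D then c1v else c2v) else 0) ∂P
          = p * c2v
            + (if i ∈ LamB d M then 0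
                else p * (1 - p) ^ (M ^ d - (M - 2) ^ d) * (c1v - c2v)) := by
      intro i
      rw [hterm_val i, hPiD_val i]
      by_cases hi : i ∈ LamB d M <;> simp [hi]
    rw [Finset.sum_congr rfl (fun i _ => h1 i), Finset.sum_add_distrib, Finset.sum_const,
      Finset.card_univ, Fintype.card_fin, nsmul_eq_mul, Finset.sum_ite, Finset.sum_const_zero,
      Finset.sum_const, zero_add, nsmul_eq_mul, hNBcard]
  -- final algebra
  have hI : ∫ ω', S ω' ∂P = p * (M : ℝ) ^ ((d : ℝ) - s) * kappa d M p K s := by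
    rw [hSint_val]
    have hc1 : c1v = (M:ℝ) ^ (-(s * (K:ℝ))) * c2v := by
      rw [hc1vdef, hc2vdef, ← Real.rpow_add hM0]
      congr 1
      ring
    have hcast1 : ((M ^ d : ℕ) : ℝ) = (M:ℝ) ^ d := by push_cast; ring
    have hcast2 : (((M - 2) ^ d : ℕ) : ℝ) = ((M:ℝ) - 2) ^ d := by
      rw [Nat.cast_pow, Nat.cast_sub hM2]
      norm_num
    have hMds : (M:ℝ) ^ ((d : ℝ) - s) = (M:ℝ) ^ d * c2v := by
      rw [hc2vdef, show (d:ℝ) - s = (d:ℝ) + (-s) by ring, Real.rpow_add hM0,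
        Real.rpow_natCast]
    rw [hc1, hcast1, hcast2, hMds]
    unfold kappa
    have hMd0 : ((M:ℝ) ^ d) ≠ 0 := by positivity
    field_simp
    ring
  -- conclusion
  filter_upwards [hpull, hcondS] with ω h1 h2 hAlive
  rw [hf_eq, h1]
  simp only [Pi.mul_apply]
  rw [h2, hI]
  have hgω : g ω = diamQ d M (substW d M X e ω w) ^ s := by
    rw [hgdef]; exact Set.indicator_of_mem (show ω ∈ A from hAlive) _
  rw [hgω]
end FractalPercolation
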